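/- Let A ∈ GL(2,ℤ) be hyperbolic. Then the centralizer of A in GL(2,ℤ) is virtually cyclic: there exists A₀ ∈ GL(2,ℤ) such that B ∈ GL(2,ℤ) commutes with A if and only if B = ±A₀ᵏ for some k ∈ ℤ. In particular, every B commuting with A satisfies Bʲ = ±Aᵏ for some integers j > 0 and k. -/

import Mathlib

open Matrix Polynomial

lemma charpoly_root_iff (N : Matrix (Fin 2) (Fin 2) ℂ) (μ : ℂ) :
    N.charpoly.IsRoot μ ↔ μ^2 - (N 0 0 + N 1 1)*μ + (N 0 0 * N 1 1 - N 0 1 * N 1 0) = 0 := by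
  rw [Matrix.charpoly, Matrix.det_fin_two, Matrix.charmatrix_apply_eq, Matrix.charmatrix_apply_eq,
    Matrix.charmatrix_apply_ne _ _ _ (by decide), Matrix.charmatrix_apply_ne _ _ _ (by decide),
    Polynomial.IsRoot.def]
  simp only [eval_add, eval_sub, eval_mul, eval_neg, eval_X, eval_C]
  constructor <;> intro h <;> linear_combination h

lemma dec_exists' (a b c e p q r s : ℚ) (hns : ¬(b = 0 ∧ c = 0 ∧ a = e))
    (h00 : a*p + b*r = p*a + q*c) (h01 : a*q + b*s = p*b + q*e)
    (h10 : c*p + e*r = r*a + s*c) :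
    ∃ x y : ℚ, p = x + y*a ∧ q = y*b ∧ r = y*c ∧ s = x + y*e := by
  by_cases hb : b ≠ 0
  · refine ⟨p - (q / b) * a, q / b, by ring, by field_simp, ?_, ?_⟩
    · field_simp; linear_combination h00
    · field_simp; linear_combination h01
  · push_neg at hb; subst hb
    by_cases hc : c ≠ 0
    · have hq : q = 0 := by
        rcases mul_eq_zero.mp (show q * c = 0 by linear_combination -h00) with h' | h'
        exacts [h', absurd h' hc]
      refine ⟨p - (r / c) * a, r / c, by ring, by rw [hq]; ring, by field_simp, ?_⟩
      field_simp; linear_combination -h10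
    · push_neg at hc; subst hc
      have hae : a - e ≠ 0 := fun h' => hns ⟨rfl, rfl, by linarith [sub_eq_zero.mp h']⟩
      have hq : q = 0 := by
        rcases mul_eq_zero.mp (show q * (a - e) = 0 by linear_combination h01) with h' | h'
        exacts [h', absurd h' hae]
      have hr : r = 0 := by
        rcases mul_eq_zero.mp (show r * (a - e) = 0 by linear_combination -h10) with h' | h'
        exacts [h', absurd h' hae]
      refine ⟨p - ((p - s) / (a - e)) * a, (p - s) / (a - e), by ring,
        by rw [hq]; ring, by rw [hr]; ring, ?_⟩
      field_simp; ring

/-- `B = x•1 + y•M` entrywise, over `ℚ`. -/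
def MatDec (M B : Matrix (Fin 2) (Fin 2) ℤ) (x y : ℚ) : Prop :=
  ((B 0 0 : ℚ) = x + y * M 0 0) ∧ ((B 0 1 : ℚ) = y * M 0 1) ∧
  ((B 1 0 : ℚ) = y * M 1 0) ∧ ((B 1 1 : ℚ) = x + y * M 1 1)

lemma matdec_exists (M N : Matrix (Fin 2) (Fin 2) ℤ)
    (hns : ¬(M 0 1 = 0 ∧ M 1 0 = 0 ∧ M 0 0 = M 1 1))
    (h : M * N = N * M) : ∃ x y : ℚ, MatDec M N x y := by
  have h00 := congrFun (congrFun h 0) 0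
  have h01 := congrFun (congrFun h 0) 1
  have h10 := congrFun (congrFun h 1) 0
  simp only [Matrix.mul_apply, Fin.sum_univ_two] at h00 h01 h10
  have hnsq : ¬((M 0 1 : ℚ) = 0 ∧ (M 1 0 : ℚ) = 0 ∧ (M 0 0 : ℚ) = M 1 1) := by
    rintro ⟨hb, hc, hae⟩
    exact hns ⟨by exact_mod_cast hb, by exact_mod_cast hc, by exact_mod_cast hae⟩
  obtain ⟨x, y, h1, h2, h3, h4⟩ :=
    dec_exists' (M 0 0) (M 0 1) (M 1 0) (M 1 1) (N 0 0) (N 0 1) (N 1 0) (N 1 1) hnsq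
      (by exact_mod_cast h00) (by exact_mod_cast h01) (by exact_mod_cast h10)
  exact ⟨x, y, h1, h2, h3, h4⟩

lemma matdec_unique (M N : Matrix (Fin 2) (Fin 2) ℤ)
    (hns : ¬(M 0 1 = 0 ∧ M 1 0 = 0 ∧ M 0 0 = M 1 1))
    {x y x' y' : ℚ} (h : MatDec M N x y) (h' : MatDec M N x' y') : x = x' ∧ y = y' := by
  obtain ⟨e1, e2, e3, e4⟩ := h
  obtain ⟨f1, f2, f3, f4⟩ := h'
  have hyy : y = y' := by
    by_cases hb : (M 0 1 : ℚ) ≠ 0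
    · have := e2.symm.trans f2
      exact mul_right_cancel₀ hb this
    · push_neg at hb
      by_cases hc : (M 1 0 : ℚ) ≠ 0
      · exact mul_right_cancel₀ hc (e3.symm.trans f3)
      · push_neg at hc
        have hae : (M 0 0 : ℚ) - M 1 1 ≠ 0 := by
          intro h'
          refine hns ⟨by exact_mod_cast hb, by exact_mod_cast hc, ?_⟩
          exact_mod_cast sub_eq_zero.mp h'
        have : y * ((M 0 0 : ℚ) - M 1 1) = y' * ((M 0 0 : ℚ) - M 1 1) := by
          linear_combination f1 - e1 + e4 - f4
        exact mul_right_cancel₀ hae this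
  refine ⟨?_, hyy⟩
  have := e1.symm.trans f1
  rw [hyy] at this
  linarith [this]

lemma matdec_one (M : Matrix (Fin 2) (Fin 2) ℤ) : MatDec M 1 1 0 := by
  refine ⟨?_, ?_, ?_, ?_⟩ <;> simp [Matrix.one_apply]

lemma matdec_mul (M N₁ N₂ : Matrix (Fin 2) (Fin 2) ℤ) {x₁ y₁ x₂ y₂ : ℚ}
    (h₁ : MatDec M N₁ x₁ y₁) (h₂ : MatDec M N₂ x₂ y₂) :
    MatDec M (N₁ * N₂) (x₁*x₂ - ((M 0 0 : ℚ) * M 1 1 - M 0 1 * M 1 0)*(y₁*y₂))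
      (x₁*y₂ + x₂*y₁ + ((M 0 0 : ℚ) + M 1 1)*(y₁*y₂)) := by
  obtain ⟨e1, e2, e3, e4⟩ := h₁
  obtain ⟨f1, f2, f3, f4⟩ := h₂
  refine ⟨?_, ?_, ?_, ?_⟩ <;>
  · simp only [Matrix.mul_apply, Fin.sum_univ_two]
    push_cast
    simp only [e1, e2, e3, e4, f1, f2, f3, f4]
    ring

lemma matdec_det (M N : Matrix (Fin 2) (Fin 2) ℤ) {x y : ℚ} (h : MatDec M N x y) :
    (N.det : ℚ) = x^2 + ((M 0 0 : ℚ) + M 1 1)*(x*y) + ((M 0 0 : ℚ) * M 1 1 - M 0 1 * M 1 0)*y^2 := by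
  obtain ⟨e1, e2, e3, e4⟩ := h
  rw [Matrix.det_fin_two]
  push_cast
  rw [e1, e2, e3, e4]
  ring

/-- real embedding helper -/
noncomputable def sigf (l : ℝ) (x y : ℚ) : ℝ := (x : ℝ) + (y : ℝ) * l

lemma sigf_mul (t d : ℤ) (l : ℝ) (hl : l^2 = t*l - d) (x₁ y₁ x₂ y₂ : ℚ) :
    sigf l (x₁*x₂ - (d:ℚ)*(y₁*y₂)) (x₁*y₂ + x₂*y₁ + (t:ℚ)*(y₁*y₂))
      = sigf l x₁ y₁ * sigf l x₂ y₂ := by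
  unfold sigf; push_cast; linear_combination (-(y₁:ℝ)*(y₂:ℝ)) * hl

lemma sigf_det (t d : ℤ) (l l' : ℝ) (hsum : l + l' = t) (hprod : l*l' = d)
    (x y : ℚ) (Dv : ℤ) (hD : (Dv:ℚ) = x^2 + (t:ℚ)*(x*y) + (d:ℚ)*y^2) :
    sigf l x y * sigf l' x y = (Dv : ℝ) := by
  unfold sigf
  have hD' : (Dv:ℝ) = (x:ℝ)^2 + (t:ℝ)*(x*y) + (d:ℝ)*(y:ℝ)^2 := by exact_mod_cast hD
  rw [hD']
  linear_combination ((x:ℝ)*(y:ℝ)) * hsum + ((y:ℝ)^2) * hprod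

lemma sigf_diff (t : ℤ) (sD : ℝ) (x y : ℚ) :
    sigf (((t:ℝ) + sD)/2) x y - sigf (((t:ℝ) - sD)/2) x y = (y:ℝ) * sD := by
  unfold sigf; ring


lemma matdec_one_of (M N : Matrix (Fin 2) (Fin 2) ℤ) (h : MatDec M N 1 0) : N = 1 := by
  obtain ⟨e1, e2, e3, e4⟩ := h
  ext i j
  fin_cases i <;> fin_cases j <;> simp [Matrix.one_apply]
  · have h : (N 0 0 : ℚ) = 1 := by rw [e1]; ring
    exact_mod_cast h
  · have h : (N 0 1 : ℚ) = 0 := by rw [e2]; ring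
    exact_mod_cast h
  · have h : (N 1 0 : ℚ) = 0 := by rw [e3]; ring
    exact_mod_cast h
  · have h : (N 1 1 : ℚ) = 1 := by rw [e4]; ring
    exact_mod_cast h

lemma matdec_negone_of (M N : Matrix (Fin 2) (Fin 2) ℤ) (h : MatDec M N (-1) 0) : N = -1 := by
  obtain ⟨e1, e2, e3, e4⟩ := h
  ext i j
  fin_cases i <;> fin_cases j <;> simp [Matrix.neg_apply, Matrix.one_apply]
  · have h : (N 0 0 : ℚ) = -1 := by rw [e1]; ring
    exact_mod_cast h
  · have h : (N 0 1 : ℚ) = 0 := by rw [e2]; ring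
    exact_mod_cast h
  · have h : (N 1 0 : ℚ) = 0 := by rw [e3]; ring
    exact_mod_cast h
  · have h : (N 1 1 : ℚ) = -1 := by rw [e4]; ring
    exact_mod_cast h


set_option maxHeartbeats 1000000 in
/-- The centralizer of a hyperbolic matrix `A` in `GL(2,ℤ)` is virtually cyclic:
there is `A₀ ∈ GL(2,ℤ)` such that `B` commutes with `A` iff `B = ±A₀ᵏ` for some
`k ∈ ℤ`.  In particular every `B` commuting with `A` satisfies `Bʲ = ±Aᵏ` for
some integers `j > 0` and `k`. -/
theorem centralizer_of_hyperbolic_virtually_cyclic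
    (A : GL (Fin 2) ℤ)
    (hhyp : ∀ μ : ℂ,
      (((A : Matrix (Fin 2) (Fin 2) ℤ).map (Int.cast : ℤ → ℂ)).charpoly).IsRoot μ →
        ‖μ‖ ≠ 1) :
    (∃ A₀ : GL (Fin 2) ℤ, ∀ B : GL (Fin 2) ℤ,
      (A * B = B * A ↔ ∃ k : ℤ, B = A₀ ^ k ∨ B = -(A₀ ^ k))) ∧
    (∀ B : GL (Fin 2) ℤ, A * B = B * A →
      ∃ (j : ℕ) (k : ℤ), 0 < j ∧ (B ^ (j : ℤ) = A ^ k ∨ B ^ (j : ℤ) = -(A ^ k))) := by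
  classical
  set M : Matrix (Fin 2) (Fin 2) ℤ := (A : Matrix (Fin 2) (Fin 2) ℤ) with hM
  set t : ℤ := M 0 0 + M 1 1 with ht
  set d : ℤ := M 0 0 * M 1 1 - M 0 1 * M 1 0 with hd
  -- every element of GL has determinant ±1
  have hdetB : ∀ B : GL (Fin 2) ℤ,
      (↑B : Matrix (Fin 2) (Fin 2) ℤ).det = 1 ∨ (↑B : Matrix (Fin 2) (Fin 2) ℤ).det = -1 := by
    intro B
    refine Int.isUnit_iff.mp (IsUnit.of_mul_eq_one (↑B⁻¹ : Matrix (Fin 2) (Fin 2) ℤ).det ?_)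
    rw [← Matrix.det_mul, ← Units.val_mul, mul_inv_cancel, Units.val_one, Matrix.det_one]
  have hdval : d = 1 ∨ d = -1 := by
    have := hdetB A
    rwa [Matrix.det_fin_two, ← hM, ← hd] at this
  -- the root hypothesis, in explicit form
  have hhyp' : ∀ μ : ℂ, μ^2 - (t:ℂ)*μ + (d:ℂ) = 0 → ‖μ‖ ≠ 1 := by
    intro μ hroot
    apply hhyp μ
    rw [charpoly_root_iff]
    simp only [Matrix.map_apply]
    rw [ht, hd] at hroot
    push_cast at hroot ⊢
    linear_combination hroot
  -- the discriminant is positive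
  have hΔpos : 0 < t^2 - 4*d := by
    by_contra hle
    push_neg at hle
    have hd1 : d = 1 := by
      rcases hdval with h | h
      · exact h
      · exfalso; rw [h] at hle; nlinarith
    rw [hd1] at hle
    have ht4 : (t:ℝ)^2 ≤ 4 := by exact_mod_cast (by nlinarith : t^2 ≤ 4)
    have h4t : (0:ℝ) ≤ 4 - (t:ℝ)^2 := by linarith
    set sr := Real.sqrt (4 - (t:ℝ)^2) with hsr
    have hsr2 : sr^2 = 4 - (t:ℝ)^2 := Real.sq_sqrt h4t
    set μ : ℂ := (((t:ℝ)/2 : ℝ) : ℂ) + (((sr/2 : ℝ)) : ℂ) * Complex.I with hμ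
    have hsrc : ((sr:ℝ) : ℂ)^2 = 4 - (t:ℂ)^2 := by
      have h' : ((sr^2 : ℝ) : ℂ) = ((4 - (t:ℝ)^2 : ℝ) : ℂ) := by rw [hsr2]
      push_cast at h'
      linear_combination h' 
    have hroot : μ^2 - (t:ℂ)*μ + (d:ℂ) = 0 := by
      rw [hμ, hd1]
      push_cast
      linear_combination (((sr:ℝ):ℂ)^2/4) * Complex.I_sq - (1/4 : ℂ) * hsrc
    have habs : ‖μ‖ = 1 := by
      rw [hμ, Complex.norm_add_mul_I]
      have : ((t:ℝ)/2)^2 + (sr/2)^2 = 1 := by nlinarith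
      rw [this, Real.sqrt_one]
    exact hhyp' μ hroot habs
  -- the discriminant is not a perfect square
  have hΔns : ¬ IsSquare (t^2 - 4*d) := by
    rintro ⟨s0, hs0⟩
    have heven : Even (t - s0) := by
      have h1 : (t - s0) * (t + s0) = 4*d := by linear_combination hs0
      have h2 : Even ((t - s0) * (t + s0)) := by rw [h1]; exact ⟨2*d, by ring⟩
      rcases Int.even_mul.mp h2 with h | h
      · exact h
      · obtain ⟨w, hw⟩ := h; exact ⟨w - s0, by omega⟩
    obtain ⟨μ₁, hμ₁⟩ := heven
    have hs0' : s0 = t - 2*μ₁ := by omega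
    rw [hs0'] at hs0
    have hdval2 : μ₁ * (t - μ₁) = d := by nlinarith [hs0]
    have hu : μ₁ = 1 ∨ μ₁ = -1 := by
      refine Int.isUnit_iff.mp ?_
      rcases hdval with h | h
      · exact IsUnit.of_mul_eq_one (t - μ₁) (by rw [hdval2, h])
      · exact IsUnit.of_mul_eq_one (-(t - μ₁)) (by rw [← neg_mul_comm, neg_mul, hdval2, h]; ring)
    have hc : (μ₁:ℂ) * ((t:ℂ) - μ₁) = d := by exact_mod_cast hdval2
    have hroot : ((μ₁:ℂ))^2 - (t:ℂ)*(μ₁:ℂ) + (d:ℂ) = 0 := by linear_combination -hc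
    refine hhyp' (μ₁:ℂ) hroot ?_
    rcases hu with h | h <;> rw [h] <;> simp
  -- M is not scalar
  have hns : ¬(M 0 1 = 0 ∧ M 1 0 = 0 ∧ M 0 0 = M 1 1) := by
    rintro ⟨hb, hc, hae⟩
    rw [ht, hd, hb, hc, hae] at hΔpos
    nlinarith
  -- real quadratic setup
  have hDnn : (0:ℤ) ≤ t^2 - 4*d := hΔpos.le
  set sD : ℝ := Real.sqrt ((t^2 - 4*d : ℤ) : ℝ) with hsD
  have hDcast : ((t^2 - 4*d : ℤ) : ℝ) = (t:ℝ)^2 - 4*(d:ℝ) := by push_cast; ring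
  have hDpos : (0:ℝ) < ((t^2 - 4*d : ℤ) : ℝ) := by exact_mod_cast hΔpos
  have hs2 : sD^2 = (t:ℝ)^2 - 4*(d:ℝ) := by rw [hsD, Real.sq_sqrt hDpos.le, hDcast]
  have hs1 : 1 ≤ sD := by
    have h1 : (1:ℝ) ≤ ((t^2 - 4*d : ℤ) : ℝ) := by exact_mod_cast hΔpos
    nlinarith [Real.sqrt_nonneg ((t^2 - 4*d : ℤ) : ℝ), hs2]
  have hsirr : Irrational sD := by
    rw [hsD]
    exact (irrational_sqrt_intCast_iff_of_nonneg hDnn).mpr hΔns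
  set lam : ℝ := ((t:ℝ) + sD)/2 with hlam
  set lam' : ℝ := ((t:ℝ) - sD)/2 with hlam'
  have hlamsq : lam^2 = (t:ℝ)*lam - (d:ℝ) := by
    rw [hlam]; linear_combination (1/4 : ℝ) * hs2
  have hsum : lam + lam' = (t:ℝ) := by rw [hlam, hlam']; ring
  have hprodl : lam * lam' = (d:ℝ) := by
    rw [hlam, hlam']; linear_combination (-1/4 : ℝ) * hs2
  -- casts of the entry combinations
  have htq : ((M 0 0 : ℚ) + M 1 1) = (t:ℚ) := by rw [ht]; push_cast; ring
  have hdq : ((M 0 0 : ℚ) * M 1 1 - M 0 1 * M 1 0) = (d:ℚ) := by rw [hd]; push_cast; ring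
  -- basic properties of decompositions
  have hsigdet : ∀ (B : GL (Fin 2) ℤ) (x y : ℚ), MatDec M (↑B) x y →
      sigf lam x y * sigf lam' x y = ((↑B : Matrix (Fin 2) (Fin 2) ℤ).det : ℝ) := by
    intro B x y hdec
    refine sigf_det t d lam lam' hsum hprodl x y _ ?_
    rw [matdec_det M (↑B) hdec, htq, hdq]
  have hsig_ne : ∀ (B : GL (Fin 2) ℤ) (x y : ℚ), MatDec M (↑B) x y →
      sigf lam x y ≠ 0 ∧ |sigf lam x y| * |sigf lam' x y| = 1 := by
    intro B x y hdec
    have h1 := hsigdet B x y hdec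
    have h2 : |sigf lam x y * sigf lam' x y| = 1 := by
      rw [h1]; rcases hdetB B with h | h <;> rw [h] <;> simp
    constructor
    · intro h0
      rw [h0, zero_mul, abs_zero] at h2
      norm_num at h2
    · rwa [abs_mul] at h2
  have hcomm_mat : ∀ B : GL (Fin 2) ℤ, A * B = B * A →
      M * (↑B : Matrix (Fin 2) (Fin 2) ℤ) = (↑B : Matrix (Fin 2) (Fin 2) ℤ) * M := by
    intro B h
    have := congrArg (Units.val) h
    rwa [Units.val_mul, Units.val_mul] at this
  have hdecB : ∀ B : GL (Fin 2) ℤ, A * B = B * A → ∃ x y : ℚ, MatDec M (↑B) x y :=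
    fun B h => matdec_exists M (↑B) hns (hcomm_mat B h)
  have hmulJ : ∀ (B C : GL (Fin 2) ℤ) (x₁ y₁ x₂ y₂ : ℚ), MatDec M (↑B) x₁ y₁ →
      MatDec M (↑C) x₂ y₂ → ∃ X Y : ℚ, MatDec M (↑(B*C)) X Y ∧
        sigf lam X Y = sigf lam x₁ y₁ * sigf lam x₂ y₂ := by
    intro B C x₁ y₁ x₂ y₂ h₁ h₂
    have hdec := matdec_mul M (↑B) (↑C) h₁ h₂
    rw [← Units.val_mul] at hdec
    refine ⟨_, _, hdec, ?_⟩
    rw [htq, hdq]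
    exact sigf_mul t d lam hlamsq x₁ y₁ x₂ y₂
  have hdec1 : MatDec M (↑(1 : GL (Fin 2) ℤ)) 1 0 := by
    rw [Units.val_one]; exact matdec_one M
  have hsig1 : sigf lam 1 0 = 1 := by unfold sigf; push_cast; ring
  have hinv : ∀ (B : GL (Fin 2) ℤ) (x y : ℚ), A * B = B * A → MatDec M (↑B) x y →
      ∃ x' y' : ℚ, (A * B⁻¹ = B⁻¹ * A) ∧ MatDec M (↑(B⁻¹)) x' y' ∧
        sigf lam x y * sigf lam x' y' = 1 := by
    intro B x y hB hdec
    have hBc : Commute A B := hB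
    have hBinv : A * B⁻¹ = B⁻¹ * A := hBc.inv_right
    obtain ⟨x', y', hdec'⟩ := hdecB B⁻¹ hBinv
    obtain ⟨X, Y, hdecP, hsigP⟩ := hmulJ B B⁻¹ x y x' y' hdec hdec'
    rw [mul_inv_cancel] at hdecP
    obtain ⟨hX, hY⟩ := matdec_unique M _ hns hdecP hdec1
    refine ⟨x', y', hBinv, hdec', ?_⟩
    rw [← hsigP, hX, hY, hsig1]
  -- powers
  have hpowN : ∀ (B : GL (Fin 2) ℤ) (x y : ℚ), A*B = B*A → MatDec M (↑B) x y →
      ∀ n : ℕ, ∃ xn yn : ℚ, MatDec M (↑(B^n)) xn yn ∧ sigf lam xn yn = (sigf lam x y)^n := by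
    intro B x y hB hdec n
    induction n with
    | zero => exact ⟨1, 0, by rw [pow_zero]; exact hdec1, by rw [pow_zero, hsig1]⟩
    | succ n ih =>
      obtain ⟨xn, yn, hdn, hsn⟩ := ih
      obtain ⟨X, Y, hdP, hsP⟩ := hmulJ (B^n) B xn yn x y hdn hdec
      exact ⟨X, Y, by rw [pow_succ]; exact hdP, by rw [hsP, hsn, pow_succ]⟩
  have hpowZ : ∀ (B : GL (Fin 2) ℤ) (x y : ℚ), A*B = B*A → MatDec M (↑B) x y →
      ∀ k : ℤ, ∃ xk yk : ℚ, MatDec M (↑(B^k)) xk yk ∧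
        |sigf lam xk yk| = |sigf lam x y| ^ k := by
    intro B x y hB hdec k
    obtain ⟨n, rfl | rfl⟩ := k.eq_nat_or_neg
    · obtain ⟨xn, yn, h1, h2⟩ := hpowN B x y hB hdec n
      exact ⟨xn, yn, by rw [zpow_natCast]; exact h1,
        by rw [h2, zpow_natCast, abs_pow]⟩
    · obtain ⟨xn, yn, h1, h2⟩ := hpowN B x y hB hdec n
      have hBn : A * B^n = B^n * A := ((show Commute A B from hB).pow_right n).eq
      obtain ⟨x', y', hc', hdec', hp⟩ := hinv (B^n) xn yn hBn h1
      refine ⟨x', y', by rw [_root_.zpow_neg, zpow_natCast]; exact hdec', ?_⟩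
      have hinveq : sigf lam x' y' = (sigf lam xn yn)⁻¹ := eq_inv_of_mul_eq_one_right hp
      rw [hinveq, abs_inv, h2, abs_pow, _root_.zpow_neg, zpow_natCast]
  -- kernel of the modulus map
  have hker : ∀ (B : GL (Fin 2) ℤ) (x y : ℚ), MatDec M (↑B) x y →
      |sigf lam x y| = 1 → B = 1 ∨ B = -1 := by
    intro B x y hdec habs
    obtain ⟨hne, hprodabs⟩ := hsig_ne B x y hdec
    have habs' : |sigf lam' x y| = 1 := by rw [habs, one_mul] at hprodabs; exact hprodabs
    have hσ := (abs_eq (by norm_num : (0:ℝ) ≤ 1)).mp habs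
    have hσ' := (abs_eq (by norm_num : (0:ℝ) ≤ 1)).mp habs'
    have hdiff : sigf lam x y - sigf lam' x y = (y:ℝ) * sD := by
      rw [hlam, hlam']; exact sigf_diff t sD x y
    have hsD0 : sD ≠ 0 := by linarith
    have hsame : ∀ x0 : ℚ, (x:ℚ) = x0 → y = 0 → MatDec M (↑B) x0 0 := by
      intro x0 hx hy
      rw [← hx, ← hy]; exact hdec
    rcases hσ with h1 | h1 <;> rcases hσ' with h2 | h2
    · -- σ = 1, σ' = 1
      have hy0 : (y:ℝ) = 0 := by
        rcases mul_eq_zero.mp (show (y:ℝ) * sD = 0 by rw [← hdiff, h1, h2]; ring) with h | h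
        exacts [h, absurd h hsD0]
      have hy : y = 0 := by exact_mod_cast hy0
      have hx1 : (x:ℝ) = 1 := by
        simp only [sigf] at h1; rw [hy0] at h1; linarith
      have hx : x = 1 := by exact_mod_cast hx1
      exact Or.inl (Units.ext (by
        rw [Units.val_one]
        exact matdec_one_of M (↑B) (by rw [← hx, ← hy]; exact hdec)))
    · -- σ = 1, σ' = -1
      exfalso
      have h3 : (y:ℝ) * sD = 2 := by rw [← hdiff, h1, h2]; ring
      have hy0 : (y:ℝ) ≠ 0 := by intro h; rw [h, zero_mul] at h3; norm_num at h3
      exact hsirr ⟨2/y, by push_cast; field_simp; linarith [h3]⟩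
    · -- σ = -1, σ' = 1
      exfalso
      have h3 : (y:ℝ) * sD = -2 := by rw [← hdiff, h1, h2]; ring
      have hy0 : (y:ℝ) ≠ 0 := by intro h; rw [h, zero_mul] at h3; norm_num at h3
      exact hsirr ⟨-2/y, by push_cast; field_simp; linarith [h3]⟩
    · -- σ = -1, σ' = -1
      have hy0 : (y:ℝ) = 0 := by
        rcases mul_eq_zero.mp (show (y:ℝ) * sD = 0 by rw [← hdiff, h1, h2]; ring) with h | h
        exacts [h, absurd h hsD0]
      have hy : y = 0 := by exact_mod_cast hy0
      have hx1 : (x:ℝ) = -1 := by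
        simp only [sigf] at h1; rw [hy0] at h1; linarith
      have hx : x = -1 := by exact_mod_cast hx1
      exact Or.inr (Units.ext (by
        rw [Units.val_neg, Units.val_one]
        exact matdec_negone_of M (↑B) (by rw [← hx, ← hy]; exact hdec)))
  -- bounded denominators
  have hden : ∃ m : ℤ, m ≠ 0 ∧ ∀ (N : Matrix (Fin 2) (Fin 2) ℤ) (x y : ℚ), MatDec M N x y →
      ∃ u v : ℤ, (x * m = (u:ℚ)) ∧ (y * m = (v:ℚ)) := by
    by_cases hb : M 0 1 ≠ 0
    · refine ⟨M 0 1, hb, fun N x y h => ⟨N 0 0 * M 0 1 - N 0 1 * M 0 0, N 0 1, ?_, ?_⟩⟩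
      · push_cast
        linear_combination (-(M 0 1:ℚ)) * h.1 + (M 0 0:ℚ) * h.2.1
      · push_cast; linear_combination -h.2.1
    · push_neg at hb
      by_cases hc : M 1 0 ≠ 0
      · refine ⟨M 1 0, hc, fun N x y h => ⟨N 0 0 * M 1 0 - N 1 0 * M 0 0, N 1 0, ?_, ?_⟩⟩
        · push_cast
          linear_combination (-(M 1 0:ℚ)) * h.1 + (M 0 0:ℚ) * h.2.2.1
        · push_cast; linear_combination -h.2.2.1
      · push_neg at hc
        have hae : M 0 0 - M 1 1 ≠ 0 := by
          intro h'; exact hns ⟨hb, hc, by omega⟩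
        refine ⟨M 0 0 - M 1 1, hae, fun N x y h =>
          ⟨N 0 0 * (M 0 0 - M 1 1) - (N 0 0 - N 1 1) * M 0 0, N 0 0 - N 1 1, ?_, ?_⟩⟩
        · push_cast
          linear_combination (M 1 1:ℚ) * h.1 - (M 0 0:ℚ) * h.2.2.2
        · push_cast; linear_combination h.2.2.2 - h.1
  -- the subgroup of logarithms
  set Sset : Set ℝ := {w | ∃ (B : GL (Fin 2) ℤ) (x y : ℚ),
      A * B = B * A ∧ MatDec M (↑B) x y ∧ w = Real.log |sigf lam x y|} with hSset
  have hzero : (0:ℝ) ∈ Sset :=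
    ⟨1, 1, 0, by rw [mul_one, one_mul], hdec1, by rw [hsig1, abs_one, Real.log_one]⟩
  have hadd : ∀ w₁ ∈ Sset, ∀ w₂ ∈ Sset, w₁ + w₂ ∈ Sset := by
    rintro w₁ ⟨B, x₁, y₁, hB, hdB, rfl⟩ w₂ ⟨C, x₂, y₂, hC, hdC, rfl⟩
    obtain ⟨X, Y, hdP, hsP⟩ := hmulJ B C x₁ y₁ x₂ y₂ hdB hdC
    refine ⟨B*C, X, Y, ?_, hdP, ?_⟩
    · rw [← mul_assoc, hB, mul_assoc, hC, ← mul_assoc]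
    · rw [hsP, abs_mul, Real.log_mul (abs_ne_zero.mpr (hsig_ne B _ _ hdB).1)
        (abs_ne_zero.mpr (hsig_ne C _ _ hdC).1)]
  have hneg : ∀ w ∈ Sset, -w ∈ Sset := by
    rintro w ⟨B, x, y, hB, hdB, rfl⟩
    obtain ⟨x', y', hBinv, hdec', hp⟩ := hinv B x y hB hdB
    refine ⟨B⁻¹, x', y', hBinv, hdec', ?_⟩
    have hinveq : sigf lam x' y' = (sigf lam x y)⁻¹ := eq_inv_of_mul_eq_one_right hp
    rw [hinveq, abs_inv, Real.log_inv]
  set S : AddSubgroup ℝ :=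
    { carrier := Sset
      zero_mem' := hzero
      add_mem' := fun ha hb => hadd _ ha _ hb
      neg_mem' := fun ha => hneg _ ha } with hS
  have hmemS : ∀ w : ℝ, w ∈ S ↔ w ∈ Sset := fun w => Iff.rfl
  -- finiteness of small elements
  have hfin : (Sset ∩ Set.Ioo (0:ℝ) (Real.log 2)).Finite := by
    obtain ⟨m, hm0, hmden⟩ := hden
    have hm1 : (1:ℝ) ≤ |(m:ℝ)| := by
      rw [← Int.cast_abs]
      exact_mod_cast Int.one_le_abs (by omega)
    set K : ℤ := (8 + 8 * |t|) * |m| with hK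
    apply Set.Finite.subset (Set.Finite.image
      (fun p : ℤ × ℤ => Real.log |(((p.1:ℝ)) + (p.2:ℝ) * lam)/(m:ℝ)|)
      (Set.finite_Icc (⟨-K, -K⟩ : ℤ × ℤ) ⟨K, K⟩))
    rintro w ⟨⟨B, x, y, hB, hdec, rfl⟩, hw0, hw2⟩
    obtain ⟨hne, hpr⟩ := hsig_ne B x y hdec
    have hσpos : 0 < |sigf lam x y| := abs_pos.mpr hne
    have h1σ : 1 < |sigf lam x y| := by
      have h := Real.exp_lt_exp.mpr hw0
      rwa [Real.exp_zero, Real.exp_log hσpos] at h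
    have h2σ : |sigf lam x y| < 2 := by
      have h := Real.exp_lt_exp.mpr hw2
      rwa [Real.exp_log hσpos, Real.exp_log (by norm_num : (0:ℝ) < 2)] at h
    have hσ'lt : |sigf lam' x y| < 1 := by
      nlinarith [abs_nonneg (sigf lam' x y)]
    have hdiff : sigf lam x y - sigf lam' x y = (y:ℝ) * sD := by
      rw [hlam, hlam']; exact sigf_diff t sD x y
    have hyb : |(y:ℝ)| ≤ 3 := by
      have h4 : |(y:ℝ)| * sD = |sigf lam x y - sigf lam' x y| := by
        rw [hdiff, abs_mul, abs_of_pos (by linarith : (0:ℝ) < sD)]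
      have h5 : |sigf lam x y - sigf lam' x y| ≤ |sigf lam x y| + |sigf lam' x y| :=
        abs_sub _ _
      nlinarith [abs_nonneg ((y:ℝ))]
    have hsum2 : sigf lam x y + sigf lam' x y = 2*(x:ℝ) + (y:ℝ)*(t:ℝ) := by
      have h' : lam + lam' = (t:ℝ) := hsum
      simp only [sigf]
      linear_combination (y:ℝ) * h'
    have hxb : |(x:ℝ)| ≤ 2 + 2*|(t:ℝ)| := by
      have e : 2*(x:ℝ) = (sigf lam x y + sigf lam' x y) - (y:ℝ)*(t:ℝ) := by
        linarith [hsum2]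
      have h6 : |2*(x:ℝ)| ≤ |sigf lam x y + sigf lam' x y| + |(y:ℝ)*(t:ℝ)| := by
        rw [e]; exact abs_sub _ _
      have h7 : |sigf lam x y + sigf lam' x y| ≤ |sigf lam x y| + |sigf lam' x y| :=
        abs_add_le _ _
      have h8 : |(y:ℝ)*(t:ℝ)| = |(y:ℝ)| * |(t:ℝ)| := abs_mul _ _
      have h9 : |2*(x:ℝ)| = 2*|(x:ℝ)| := by rw [abs_mul, abs_two]
      nlinarith [abs_nonneg ((t:ℝ)), abs_nonneg ((x:ℝ))]
    obtain ⟨u, v, hu, hv⟩ := hmden (↑B) x y hdec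
    have huR : (x:ℝ) * (m:ℝ) = (u:ℝ) := by exact_mod_cast hu
    have hvR : (y:ℝ) * (m:ℝ) = (v:ℝ) := by exact_mod_cast hv
    have htabs : ((|t| : ℤ) : ℝ) = |(t:ℝ)| := by push_cast; ring
    have hKR : ((K:ℤ):ℝ) = (8 + 8*|(t:ℝ)|) * |(m:ℝ)| := by
      rw [hK]; push_cast; ring
    have hub : |u| ≤ K := by
      have h10 : |(u:ℝ)| ≤ ((K:ℤ):ℝ) := by
        rw [← huR, abs_mul, hKR]
        nlinarith [abs_nonneg ((m:ℝ)), abs_nonneg ((t:ℝ))]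
      rw [← Int.cast_abs] at h10
      exact_mod_cast h10
    have hvb : |v| ≤ K := by
      have h10 : |(v:ℝ)| ≤ ((K:ℤ):ℝ) := by
        rw [← hvR, abs_mul, hKR]
        nlinarith [abs_nonneg ((m:ℝ)), abs_nonneg ((t:ℝ))]
      rw [← Int.cast_abs] at h10
      exact_mod_cast h10
    refine ⟨(u, v), Set.mem_Icc.mpr ⟨⟨?_, ?_⟩, ⟨?_, ?_⟩⟩, ?_⟩
    · exact (abs_le.mp hub).1
    · exact (abs_le.mp hvb).1
    · exact (abs_le.mp hub).2
    · exact (abs_le.mp hvb).2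
    · have hmne : (m:ℝ) ≠ 0 := by exact_mod_cast hm0
      have hval : ((u:ℝ) + (v:ℝ)*lam)/(m:ℝ) = sigf lam x y := by
        rw [← huR, ← hvR]
        unfold sigf
        field_simp
      simp only []
      rw [hval]
  -- dichotomy
  rcases AddSubgroup.dense_or_cyclic S with hdense | ⟨α, hα⟩
  · exfalso
    have hdense' : Dense Sset := hdense
    have hlog2 : (0:ℝ) < Real.log 2 := Real.log_pos (by norm_num)
    have h1 : Set.Ioo (0:ℝ) (Real.log 2) ⊆ closure (Set.Ioo (0:ℝ) (Real.log 2) ∩ Sset) :=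
      hdense'.open_subset_closure_inter isOpen_Ioo
    have h2 : (Set.Ioo (0:ℝ) (Real.log 2) ∩ Sset).Finite := by
      rw [Set.inter_comm]; exact hfin
    have h4 : Set.Ioo (0:ℝ) (Real.log 2) ⊆ (Set.Ioo (0:ℝ) (Real.log 2) ∩ Sset) := by
      rwa [h2.isClosed.closure_eq] at h1
    exact Set.Ioo_infinite hlog2 (h2.subset h4)
  · have hαS : α ∈ S := by rw [hα]; exact AddSubgroup.subset_closure (Set.mem_singleton α)
    obtain ⟨A₀, x₀, y₀, hA₀comm, hA₀dec, hA₀val⟩ := (hmemS α).mp hαS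
    have part1 : ∀ B : GL (Fin 2) ℤ,
        (A * B = B * A ↔ ∃ k : ℤ, B = A₀ ^ k ∨ B = -(A₀ ^ k)) := by
      intro B
      constructor
      · intro hB
        obtain ⟨x, y, hdec⟩ := hdecB B hB
        have hwS : Real.log |sigf lam x y| ∈ S := (hmemS _).mpr ⟨B, x, y, hB, hdec, rfl⟩
        rw [hα] at hwS
        obtain ⟨k, hk⟩ := AddSubgroup.mem_closure_singleton.mp hwS
        refine ⟨k, ?_⟩
        have hA₀C : Commute A A₀ := hA₀comm
        have hcommk : A * A₀^k = A₀^k * A := (hA₀C.zpow_right k).eq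
        obtain ⟨xk, yk, hdeck, habsk⟩ := hpowZ A₀ x₀ y₀ hA₀comm hA₀dec k
        obtain ⟨x', y', hcommk', hdec', hprod1⟩ := hinv (A₀^k) xk yk hcommk hdeck
        obtain ⟨X, Y, hdecC, hsigC⟩ := hmulJ B ((A₀^k)⁻¹) x y x' y' hdec hdec'
        have hσ₀ne : sigf lam x₀ y₀ ≠ 0 := (hsig_ne A₀ x₀ y₀ hA₀dec).1
        have hσ₀pos : 0 < |sigf lam x₀ y₀| := abs_pos.mpr hσ₀ne
        have hσne : sigf lam x y ≠ 0 := (hsig_ne B x y hdec).1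
        have hσpos : 0 < |sigf lam x y| := abs_pos.mpr hσne
        have hklog : Real.log |sigf lam x y| = (k:ℝ) * Real.log |sigf lam x₀ y₀| := by
          rw [← hk, hA₀val, zsmul_eq_mul]
        have habsσ : |sigf lam x y| = |sigf lam x₀ y₀| ^ k := by
          apply Real.log_injOn_pos (Set.mem_Ioi.mpr hσpos)
            (Set.mem_Ioi.mpr (zpow_pos hσ₀pos k))
          rw [Real.log_zpow, hklog]
        have habsinv : |sigf lam x' y'| = (|sigf lam x₀ y₀| ^ k)⁻¹ := by
          have h1 : sigf lam x' y' = (sigf lam xk yk)⁻¹ := eq_inv_of_mul_eq_one_right hprod1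
          rw [h1, abs_inv, habsk]
        have habsC : |sigf lam X Y| = 1 := by
          rw [hsigC, abs_mul, habsσ, habsinv]
          exact mul_inv_cancel₀ (ne_of_gt (zpow_pos hσ₀pos k))
        rcases hker (B * (A₀^k)⁻¹) X Y hdecC habsC with h | h
        · exact Or.inl (mul_inv_eq_one.mp h)
        · right
          have h2 := mul_inv_eq_iff_eq_mul.mp h
          rwa [neg_one_mul] at h2
      · rintro ⟨k, rfl | rfl⟩
        · exact ((show Commute A A₀ from hA₀comm).zpow_right k).eq
        · exact (((show Commute A A₀ from hA₀comm).zpow_right k).neg_right).eq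
    refine ⟨⟨A₀, part1⟩, ?_⟩
    intro B hB
    obtain ⟨k, hk⟩ := (part1 B).mp hB
    obtain ⟨mm, hmm⟩ := (part1 A).mp rfl
    have hmm0 : mm ≠ 0 := by
      rintro rfl
      rw [zpow_zero] at hmm
      rcases hmm with h | h
      · have hM1 : M = 1 := by rw [hM, h, Units.val_one]
        rw [ht, hd, hM1] at hΔpos
        simp [Matrix.one_apply] at hΔpos
      · have hM1 : M = -1 := by rw [hM, h, Units.val_neg, Units.val_one]
        rw [ht, hd, hM1] at hΔpos
        simp [Matrix.neg_apply, Matrix.one_apply] at hΔpos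
    have h2mm : Even (2*mm) := even_two_mul mm
    have h2k : Even (2*k) := even_two_mul k
    have hBpow : B ^ (2*mm) = A₀ ^ (k*(2*mm)) := by
      rcases hk with rfl | rfl
      · rw [← _root_.zpow_mul]
      · rw [h2mm.neg_zpow, ← _root_.zpow_mul]
    have hApow : A ^ (2*k) = A₀ ^ (k*(2*mm)) := by
      rcases hmm with rfl | rfl
      · rw [← _root_.zpow_mul, show mm*(2*k) = k*(2*mm) from by ring]
      · rw [h2k.neg_zpow, ← _root_.zpow_mul, show mm*(2*k) = k*(2*mm) from by ring]
    have hkey : B ^ (2*mm) = A ^ (2*k) := by rw [hBpow, hApow]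
    rcases lt_or_gt_of_ne hmm0 with hneg | hpos
    · refine ⟨(-(2*mm)).toNat, -(2*k), by omega, Or.inl ?_⟩
      have hcast : (((-(2*mm)).toNat : ℕ) : ℤ) = -(2*mm) := Int.toNat_of_nonneg (by omega)
      rw [hcast, _root_.zpow_neg, _root_.zpow_neg, hkey]
    · refine ⟨(2*mm).toNat, 2*k, by omega, Or.inl ?_⟩
      rw [Int.toNat_of_nonneg (by omega)]
      exact hkey
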